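/- Let p₁ and p₂ be distinct primes, n = p₁p₂, and g = gcd(p₁ − 1, p₂ − 1). If ℤ_n = ℤ/nℤ is a halidon ring with index m (that is, m is invertible in ℤ_n and ℤ_n contains a primitive m-th root of unity in the halidon sense), then m divides g; in particular g is the maximum index for which ℤ_n is a halidon ring. -/
import Mathlib


open scoped BigOperators

/-- `ω` is a primitive `m`-th root of unity in the halidon sense: `m` is the least
positive integer with `ω ^ m = 1`, and for every integer `k`,
`∑_{r=0}^{m-1} ω ^ (r k) = m` if `m ∣ k` and `= 0` otherwise. (Since `ω ^ m = 1`, it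
suffices to quantify over natural number exponents `k`.) -/
def IsHalidonPrimitiveRoot {R : Type*} [CommRing R] (m : ℕ) (ω : R) : Prop :=
  0 < m ∧ ω ^ m = 1 ∧ (∀ k : ℕ, 0 < k → ω ^ k = 1 → m ≤ k) ∧
    ∀ k : ℕ, (∑ r ∈ Finset.range m, ω ^ (r * k)) = if m ∣ k then (m : R) else 0

lemma halidon_aux (p n : ℕ) (hp : p.Prime) (hdvd : p ∣ n) (m : ℕ)
    (hm : IsUnit ((m : ℕ) : ZMod n)) (ω : ZMod n)
    (hω : IsHalidonPrimitiveRoot m ω) : m ∣ p - 1 := by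
  haveI : Fact p.Prime := ⟨hp⟩
  obtain ⟨hm0, hωm, hmin, hsum⟩ := hω
  set f := ZMod.castHom hdvd (ZMod p) with hf
  set a := f ω with ha
  have ha1 : a ^ m = 1 := by rw [ha, ← map_pow, hωm, map_one]
  have hane : a ≠ 0 := by
    intro h
    rw [h, zero_pow hm0.ne'] at ha1
    exact zero_ne_one ha1
  have hap : a ^ (p - 1) = 1 := ZMod.pow_card_sub_one_eq_one hane
  by_contra hnd
  have hs := hsum (p - 1)
  have h2 : (∑ r ∈ Finset.range m, a ^ (r * (p - 1))) = 0 := by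
    have := congrArg f hs
    simpa [hnd, map_sum, map_pow] using this
  have h3 : (∑ r ∈ Finset.range m, a ^ (r * (p - 1))) = (m : ZMod p) := by
    rw [Finset.sum_congr rfl fun r _ => by rw [mul_comm, pow_mul, hap, one_pow]]
    simp
  have hmu : IsUnit ((m : ℕ) : ZMod p) := by
    have := hm.map f
    simpa using this
  rw [h3] at h2
  exact hmu.ne_zero h2

/-- Let `p₁` and `p₂` be distinct primes, `n = p₁ p₂`, and
`g = gcd(p₁ − 1, p₂ − 1)`. If `ℤ/nℤ` is a halidon ring with index `m` (i.e. `m` is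
invertible in `ℤ/nℤ` and `ℤ/nℤ` contains a primitive `m`-th root of unity in the
halidon sense), then `m ∣ g`; in particular `g` is the maximum index for which `ℤ/nℤ`
is a halidon ring. -/
theorem halidon_index_divides_gcd (p₁ p₂ : ℕ) (hp₁ : p₁.Prime) (hp₂ : p₂.Prime)
    (hne : p₁ ≠ p₂) (m : ℕ) (hm : IsUnit ((m : ℕ) : ZMod (p₁ * p₂)))
    (ω : ZMod (p₁ * p₂)) (hω : IsHalidonPrimitiveRoot m ω) :
    m ∣ Nat.gcd (p₁ - 1) (p₂ - 1) := by
  exact Nat.dvd_gcd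
    (halidon_aux p₁ (p₁ * p₂) hp₁ (dvd_mul_right _ _) m hm ω hω)
    (halidon_aux p₂ (p₁ * p₂) hp₂ (dvd_mul_left _ _) m hm ω hω)
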